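/- Let R be a commutative ring and let m₁,…,m_μ be integers with greatest common divisor d. In the Laurent polynomial ring R[t^{±1}], the ideal generated by the elements t^{m₁} − 1, …, t^{m_μ} − 1 is equal to the principal ideal generated by t^d − 1. -/

import Mathlib

open LaurentPolynomial

private lemma T_mul_sub_one_mem {R : Type*} [CommRing R] (I : Ideal (LaurentPolynomial R))
    (a : ℤ) (ha : (T a - 1 : LaurentPolynomial R) ∈ I) (k : ℤ) :
    (T (a * k) - 1 : LaurentPolynomial R) ∈ I := by
  have hmk : Ideal.Quotient.mk I (T a) = 1 := by
    have := Ideal.Quotient.eq_zero_iff_mem.2 ha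
    rwa [map_sub, map_one, sub_eq_zero] at this
  have hneg : Ideal.Quotient.mk I (T (-a)) = 1 := by
    have h : (T (a + -a) : LaurentPolynomial R) = 1 := by simp
    rw [T_add] at h
    have := congrArg (Ideal.Quotient.mk I) h
    rwa [map_mul, hmk, one_mul, map_one] at this
  suffices h : Ideal.Quotient.mk I (T (a * k)) = 1 by
    rw [← Ideal.Quotient.eq_zero_iff_mem, map_sub, map_one, sub_eq_zero, h]
  induction k using Int.induction_on with
  | zero => simp
  | succ n ih => rw [mul_add, mul_one, T_add, map_mul, ih, hmk, mul_one]
  | pred n ih =>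
      rw [mul_sub, mul_one, sub_eq_add_neg, T_add, map_mul, ih, one_mul, hneg]

private lemma gcd_mem_span {ι : Type*} (s : Finset ι) (f : ι → ℤ) :
    (s.gcd f : ℤ) ∈ Ideal.span (f '' s) := by
  classical
  induction s using Finset.induction_on with
  | empty => simp [Finset.gcd_empty]
  | @insert a s ha ih =>
      rw [Finset.gcd_insert]
      simp only [Finset.coe_insert]
      have h1 : Ideal.span {f a, s.gcd f} ≤ Ideal.span (f '' insert a s) := by
        rw [Ideal.span_le]
        rintro x (rfl | rfl)
        · exact Ideal.subset_span ⟨a, Set.mem_insert _ _, rfl⟩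
        · exact Ideal.span_mono (Set.image_mono (f := f) (Set.subset_insert _ _)) ih
      have h2 : (GCDMonoid.gcd (f a) (s.gcd f) : ℤ) ∈ Ideal.span {f a, s.gcd f} := by
        rw [← _root_.span_gcd]
        exact Ideal.subset_span rfl
      exact h1 h2

theorem stmt_5 {R : Type*} [CommRing R] {μ : ℕ} (m : Fin μ → ℤ) :
    Ideal.span (Set.range fun i : Fin μ => (T (m i) - 1 : LaurentPolynomial R))
      = Ideal.span {(T (Finset.univ.gcd m) - 1 : LaurentPolynomial R)} := by
  set d : ℤ := Finset.univ.gcd m with hd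
  set I : Ideal (LaurentPolynomial R) :=
    Ideal.span (Set.range fun i : Fin μ => (T (m i) - 1 : LaurentPolynomial R)) with hI
  apply le_antisymm
  · rw [Ideal.span_le]
    rintro x ⟨i, rfl⟩
    have hdvd : d ∣ m i := Finset.gcd_dvd (Finset.mem_univ i)
    obtain ⟨k, hk⟩ := hdvd
    show (T (m i) - 1 : LaurentPolynomial R) ∈ Ideal.span {(T d - 1 : LaurentPolynomial R)}
    rw [hk]
    exact T_mul_sub_one_mem _ d (Ideal.mem_span_singleton_self _) k
  · rw [Ideal.span_le, Set.singleton_subset_iff]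
    -- the set of n with T n - 1 ∈ I is an ideal of ℤ
    let S : Ideal ℤ :=
      { carrier := {n : ℤ | (T n - 1 : LaurentPolynomial R) ∈ I}
        zero_mem' := by simp
        add_mem' := by
          intro a b ha hb
          have : (T (a + b) - 1 : LaurentPolynomial R)
              = T a * (T b - 1) + (T a - 1) := by
            rw [T_add]; ring
          rw [Set.mem_setOf_eq, this]
          exact add_mem (Ideal.mul_mem_left I _ hb) ha
        smul_mem' := by
          intro c n hn
          simpa [mul_comm] using T_mul_sub_one_mem I n hn c }
    have hle : Ideal.span (m '' ↑(Finset.univ : Finset (Fin μ))) ≤ S := by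
      rw [Ideal.span_le]
      rintro x ⟨i, _, rfl⟩
      exact Ideal.subset_span ⟨i, rfl⟩
    have hdS : d ∈ S := hle (gcd_mem_span Finset.univ m)
    exact hdS
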